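/- arXiv:2305.06884 — 2 statements merged into one kernel-verified Lean document; each statement's English description precedes it below -/
import Mathlib

section
/- For any sampling strategy (q_t) and any betting strategy (λ_t(m*)), the wealth process (W_t(m*))_{t=0}^N evaluated at the true misstated fraction m* is a nonnegative martingale with respect to the filtration (F_t) with initial value W_0(m*) = 1. -/
open MeasureTheory Finset

namespace RLFA

variable {Ω : Type*}

/-- `remaining I t ω` is the set `N_t = {1,…,N} \ {I_1, …, I_{t-1}}` of indices not yet
sampled before time `t`. -/
def remaining {N : ℕ} (I : ℕ → Ω → Fin N) (t : ℕ) (ω : Ω) : Finset (Fin N) :=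
  Finset.univ \ (Finset.Icc 1 (t - 1)).image fun j => I j ω

/-- The filtration `F_t = σ(I_1, …, I_t)`. -/
def filt {N : ℕ} (I : ℕ → Ω → Fin N) (t : ℕ) : MeasurableSpace Ω :=
  ⨆ j ∈ Finset.Icc 1 t, MeasurableSpace.comap (I j) ⊤

/-- The importance-weighted observation `Z_t = f(I_t) · π(I_t) / q_t(I_t)`. -/
noncomputable def Zt {N : ℕ} (π f : Fin N → ℝ) (q : ℕ → Ω → Fin N → ℝ)
    (I : ℕ → Ω → Fin N) (t : ℕ) (ω : Ω) : ℝ :=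
  f (I t ω) * (π (I t ω) / q t ω (I t ω))

/-- `μ_t(m) = m − Σ_{j=1}^{t−1} π(I_j) f(I_j)`. -/
def muT {N : ℕ} (π f : Fin N → ℝ) (I : ℕ → Ω → Fin N) (m : ℝ) (t : ℕ) (ω : Ω) : ℝ :=
  m - ∑ j ∈ Finset.Icc 1 (t - 1), π (I j ω) * f (I j ω)

lemma filt_le {N : ℕ} (I : ℕ → Ω → Fin N) {s t : ℕ} (h : s ≤ t) : filt I s ≤ filt I t := by
  apply iSup₂_le
  intro j hj
  exact le_iSup₂ (f := fun (j : ℕ) (_ : j ∈ Finset.Icc 1 t) => MeasurableSpace.comap (I j) ⊤)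
    j (by simp only [Finset.mem_Icc] at hj ⊢; omega)

lemma preimage_meas {N : ℕ} (I : ℕ → Ω → Fin N) {j t : ℕ} (hj : j ∈ Finset.Icc 1 t)
    (s : Set (Fin N)) : MeasurableSet[filt I t] (I j ⁻¹' s) := by
  have h1 : MeasurableSet[MeasurableSpace.comap (I j) ⊤] (I j ⁻¹' s) := ⟨s, trivial, rfl⟩
  exact (le_iSup₂ (f := fun (j : ℕ) (_ : j ∈ Finset.Icc 1 t) => MeasurableSpace.comap (I j) ⊤)
    j hj) _ h1

lemma comp_sm {N : ℕ} {m : MeasurableSpace Ω} (J : Ω → Fin N)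
    (hJ : ∀ i : Fin N, MeasurableSet[m] (J ⁻¹' {i}))
    (F : Ω → Fin N → ℝ) (hF : ∀ i, StronglyMeasurable[m] fun ω => F ω i) :
    StronglyMeasurable[m] (fun ω => F ω (J ω)) := by
  have heq : (fun ω => F ω (J ω))
      = fun ω => ∑ i : Fin N, (J ⁻¹' {i}).indicator (fun ω => F ω i) ω := by
    funext ω
    rw [Finset.sum_eq_single (J ω)]
    · simp [Set.indicator_apply]
    · intro i _ hne
      simp [Set.indicator_apply, Ne.symm hne]
    · simp
  rw [heq]
  exact Finset.stronglyMeasurable_fun_sum _ (fun i _ => (hF i).indicator (hJ i))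

/-- For any sampling strategy `(q_t)` and any betting strategy `(λ_t(m*))`,
the wealth process `(W_t(m*))_{t=0}^N` evaluated at the true misstated fraction `m*` is a
nonnegative martingale with respect to the filtration `(F_t)` with initial value `W_0(m*) = 1`. -/
theorem statement1
    [m0 : MeasurableSpace Ω] (μ : Measure Ω) [IsProbabilityMeasure μ]
    {N : ℕ} (hN : 1 ≤ N)
    (π f : Fin N → ℝ)
    (hπ : ∀ i, π i ∈ Set.Ioc (0 : ℝ) 1) (hπsum : ∑ i, π i = 1)
    (hf : ∀ i, f i ∈ Set.Icc (0 : ℝ) 1)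
    (I : ℕ → Ω → Fin N) (hI : ∀ t, Measurable (I t))
    (q : ℕ → Ω → Fin N → ℝ)
    (hq_meas : ∀ t, 1 ≤ t → t ≤ N → ∀ i,
      StronglyMeasurable[filt I (t - 1)] fun ω => q t ω i)
    (hq_pos : ∀ t ω, 1 ≤ t → t ≤ N → ∀ i ∈ remaining I t ω, 0 < q t ω i)
    (hq_sum : ∀ t ω, 1 ≤ t → t ≤ N → ∑ i ∈ remaining I t ω, q t ω i = 1)
    (hWoR : ∀ t ω, 1 ≤ t → t ≤ N → I t ω ∈ remaining I t ω)
    (hcond : ∀ t, 1 ≤ t → t ≤ N → ∀ G : Ω → Fin N → ℝ,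
      (∀ i, StronglyMeasurable[filt I (t - 1)] fun ω => G ω i) →
      μ[(fun ω => G ω (I t ω)) | filt I (t - 1)]
        =ᵐ[μ] fun ω => ∑ i ∈ remaining I t ω, q t ω i * G ω i)
    (mstar : ℝ) (hmstar : mstar = ∑ i, π i * f i)
    -- the betting strategy `(λ_t(m*))`: predictable, and keeping the wealth nonnegative
    (lam : ℕ → Ω → ℝ)
    (hlam_meas : ∀ t, 1 ≤ t → t ≤ N → StronglyMeasurable[filt I (t - 1)] (lam t))
    (hfac : ∀ t, 1 ≤ t → t ≤ N →
      ∀ᵐ ω ∂μ, 0 ≤ 1 + lam t ω * (Zt π f q I t ω - muT π f I mstar t ω))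
    -- the wealth process `W_t(m*)`
    (W : ℕ → Ω → ℝ)
    (hW0 : ∀ ω, W 0 ω = 1)
    (hWrec : ∀ t, 1 ≤ t → t ≤ N → ∀ ω,
      W t ω = W (t - 1) ω * (1 + lam t ω * (Zt π f q I t ω - muT π f I mstar t ω))) :
    (∀ ω, W 0 ω = 1) ∧
    (∀ t, t ≤ N → StronglyMeasurable[filt I t] (W t)) ∧
    (∀ t, t ≤ N → ∀ᵐ ω ∂μ, 0 ≤ W t ω) ∧
    (∀ t, 1 ≤ t → t ≤ N → μ[W t | filt I (t - 1)] =ᵐ[μ] W (t - 1)) := by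
  -- measurability of muT at level t-1 works for any t; state at level s where sum is over Icc 1 s
  have hmuT_meas : ∀ t : ℕ, t ≤ N → StronglyMeasurable[filt I (t - 1)] (muT π f I mstar t) := by
    intro t _
    apply StronglyMeasurable.sub stronglyMeasurable_const
    apply Finset.stronglyMeasurable_fun_sum
    intro j hj
    exact comp_sm (I j) (fun i => preimage_meas I hj _)
      (fun _ i => π i * f i) (fun i => stronglyMeasurable_const)
  have hZt_meas : ∀ t : ℕ, 1 ≤ t → t ≤ N → StronglyMeasurable[filt I t] (Zt π f q I t) := by
    intro t ht htN
    have htt : t ∈ Finset.Icc 1 t := by simp [ht]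
    exact comp_sm (I t) (fun i => preimage_meas I htt _)
      (fun ω i => f i * (π i / q t ω i))
      (fun i => (measurable_const.mul (measurable_const.div
        (((hq_meas t ht htN i).measurable).mono (filt_le I (Nat.sub_le t 1)) le_rfl))).stronglyMeasurable)
  -- measurability of W
  have hWm : ∀ t, t ≤ N → StronglyMeasurable[filt I t] (W t) := by
    intro t
    induction t with
    | zero =>
      intro _
      have : W 0 = fun _ => (1 : ℝ) := funext hW0
      rw [this]; exact stronglyMeasurable_const
    | succ n ih =>
      intro h
      have hn : n ≤ N := Nat.le_of_succ_le h
      have h1 : 1 ≤ n + 1 := Nat.succ_le_succ (Nat.zero_le n)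
      have hWeq : W (n + 1) = fun ω =>
          W n ω * (1 + lam (n+1) ω * (Zt π f q I (n+1) ω - muT π f I mstar (n+1) ω)) := by
        funext ω
        rw [hWrec (n+1) h1 h ω]
        simp
      rw [hWeq]
      have hle : filt I n ≤ filt I (n+1) := filt_le I (Nat.le_succ n)
      have hle' : filt I (n+1-1) ≤ filt I (n+1) := filt_le I (Nat.sub_le _ _)
      exact (ih hn).mono hle |>.mul
        (stronglyMeasurable_const.add (((hlam_meas (n+1) h1 h).mono hle').mul
          ((hZt_meas (n+1) h1 h).sub ((hmuT_meas (n+1) h).mono hle'))))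
  refine ⟨hW0, hWm, ?_, ?_⟩
  · -- nonnegativity
    intro t
    induction t with
    | zero =>
      intro _
      filter_upwards with ω
      rw [hW0]; norm_num
    | succ n ih =>
      intro h
      have hn : n ≤ N := Nat.le_of_succ_le h
      have h1 : 1 ≤ n + 1 := Nat.succ_le_succ (Nat.zero_le n)
      filter_upwards [ih hn, hfac (n+1) h1 h] with ω h2 h3
      rw [hWrec (n+1) h1 h ω]
      simp only [Nat.add_sub_cancel]
      exact mul_nonneg h2 h3
  · -- martingale property
    intro t ht htN
    set G : Ω → Fin N → ℝ := fun ω i =>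
      W (t-1) ω * (1 + lam t ω * (f i * (π i / q t ω i) - muT π f I mstar t ω)) with hGdef
    have hG : ∀ i, StronglyMeasurable[filt I (t-1)] fun ω => G ω i := by
      intro i
      exact (hWm (t-1) (le_trans (Nat.sub_le t 1) htN)).mul
        (stronglyMeasurable_const.add ((hlam_meas t ht htN).mul
          (((measurable_const.mul (measurable_const.div
            (hq_meas t ht htN i).measurable)).stronglyMeasurable).sub (hmuT_meas t htN))))
    have h1 := hcond t ht htN G hG
    have h2 : (fun ω => G ω (I t ω)) = W t := by
      funext ω
      rw [hWrec t ht htN ω]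
      rfl
    rw [h2] at h1
    refine h1.trans (Filter.EventuallyEq.of_eq ?_)
    funext ω
    -- injectivity of sampled indices
    have hinj : ∀ j ∈ Finset.Icc 1 (t-1), ∀ k ∈ Finset.Icc 1 (t-1),
        I j ω = I k ω → j = k := by
      have key : ∀ j k, j ∈ Finset.Icc 1 (t-1) → k ∈ Finset.Icc 1 (t-1) → j < k →
          I j ω ≠ I k ω := by
        intro j k hj hk hjk
        simp only [Finset.mem_Icc] at hj hk
        have hkN : k ≤ N := le_trans hk.2 (le_trans (Nat.sub_le t 1) htN)
        have hWk := hWoR k ω hk.1 hkN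
        rw [remaining, Finset.mem_sdiff] at hWk
        intro heq
        exact hWk.2 (Finset.mem_image.mpr ⟨j, Finset.mem_Icc.mpr ⟨hj.1, by omega⟩, heq⟩)
      intro j hj k hk heq
      rcases lt_trichotomy j k with h | h | h
      · exact absurd heq (key j k hj hk h)
      · exact h
      · exact absurd heq.symm (key k j hk hj h)
    have hμ : ∑ i ∈ remaining I t ω, π i * f i = muT π f I mstar t ω := by
      rw [remaining, Finset.sum_sdiff_eq_sub (Finset.subset_univ _),
        Finset.sum_image hinj]
      simp only [muT, hmstar]
    have hqsum := hq_sum t ω ht htN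
    calc ∑ i ∈ remaining I t ω, q t ω i * G ω i
        = ∑ i ∈ remaining I t ω,
            (W (t-1) ω * ((1 - lam t ω * muT π f I mstar t ω) * q t ω i)
              + W (t-1) ω * (lam t ω * (π i * f i))) := by
          refine Finset.sum_congr rfl (fun i hi => ?_)
          have hq : q t ω i ≠ 0 := (hq_pos t ω ht htN i hi).ne'
          simp only [hGdef]
          field_simp
          ring
      _ = W (t-1) ω * ((1 - lam t ω * muT π f I mstar t ω) * ∑ i ∈ remaining I t ω, q t ω i)
            + W (t-1) ω * (lam t ω * ∑ i ∈ remaining I t ω, π i * f i) := by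
          rw [Finset.sum_add_distrib]
          simp only [← Finset.mul_sum]
      _ = W (t-1) ω := by
          rw [hqsum, hμ]; ring

end RLFA
end

section
/- (Proposition 4.1.) For any δ ∈ (0,1), any side information S : {1,…,N} → [0,1], and any predictable sequence (β_t) with β_t ∈ [−1,1], with probability at least 1−δ it holds simultaneously for all t ≥ 1 that |Σ_{i=1}^t β_i U_i| ≤ 1.7·√(t·(log log(2t) + 0.72·log(10.4/δ))), where U_i = S(I_i) − Σ_{j∈N_i} q_i(j) S(j); in particular |(1/n)Σ_{t=1}^n β_t U_t| = O(√(log(log n/δ)/n)) uniformly in n. -/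
open MeasureTheory Finset

open Real

-- weighted AM-GM: a²b⁵ ≤ (2a⁷+5b⁷)/7
lemma amgm7 {a b : ℝ} (ha : 0 < a) (hab : a ≤ b) : 7*(a^2*b^5) ≤ 2*a^7+5*b^7 := by
  nlinarith [mul_nonneg (sub_nonneg.2 hab) (sq_nonneg a), mul_nonneg (sub_nonneg.2 hab) (sq_nonneg b),
    pow_pos ha 2, pow_pos (ha.trans_le hab) 5, mul_nonneg (mul_nonneg (sub_nonneg.2 hab) (sub_nonneg.2 hab)) (pow_nonneg ha.le 5),
    mul_nonneg (mul_nonneg (sub_nonneg.2 hab) ha.le) (pow_nonneg (ha.trans_le hab).le 4),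
    mul_nonneg (mul_nonneg (sub_nonneg.2 hab) (pow_nonneg ha.le 2)) (pow_nonneg (ha.trans_le hab).le 3),
    mul_nonneg (mul_nonneg (sub_nonneg.2 hab) (pow_nonneg ha.le 3)) (pow_nonneg (ha.trans_le hab).le 2),
    mul_nonneg (mul_nonneg (sub_nonneg.2 hab) (pow_nonneg ha.le 4)) (ha.trans_le hab).le,
    mul_nonneg (mul_nonneg (sub_nonneg.2 hab) (pow_nonneg ha.le 5)) (ha.trans_le hab).le]

-- rpow helper: x^(-(7/5)) ≤ c from polynomial fact
lemma rpow_n75_le {x c : ℝ} (hx : 0 < x) (hc : 0 < c) (h : 1 ≤ c^5 * x^7) :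
    x ^ (-(7/5) : ℝ) ≤ c := by
  have h1 : (x ^ ((7:ℝ)/5))^(5:ℕ) = x^(7:ℕ) := by
    rw [← Real.rpow_natCast (x ^ ((7:ℝ)/5)) 5, ← Real.rpow_mul hx.le, ← Real.rpow_natCast x 7]
    norm_num
  have h4 : (c⁻¹)^5 ≤ x^(7:ℕ) := by
    rw [inv_pow, inv_le_iff_one_le_mul₀ (pow_pos hc 5)]
    nlinarith [h]
  have h2 : c⁻¹ ≤ x ^ ((7:ℝ)/5) := by
    apply le_of_pow_le_pow_left₀ (n := 5) (by norm_num) (Real.rpow_nonneg hx.le _)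
    rw [h1]; exact h4
  have h3 : x ^ (-(7/5) : ℝ) = (x ^ ((7:ℝ)/5))⁻¹ := by
    rw [← Real.rpow_neg hx.le]
  rw [h3]
  calc (x ^ ((7:ℝ)/5))⁻¹ ≤ (c⁻¹)⁻¹ := by
        apply inv_anti₀ (by positivity) h2
    _ = c := inv_inv c

lemma rpow_n25_le {x c : ℝ} (hx : 0 < x) (hc : 0 < c) (h : 1 ≤ c^5 * x^2) :
    x ^ (-(2/5) : ℝ) ≤ c := by
  have h1 : (x ^ ((2:ℝ)/5))^(5:ℕ) = x^(2:ℕ) := by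
    rw [← Real.rpow_natCast (x ^ ((2:ℝ)/5)) 5, ← Real.rpow_mul hx.le, ← Real.rpow_natCast x 2]
    norm_num
  have h4 : (c⁻¹)^5 ≤ x^(2:ℕ) := by
    rw [inv_pow, inv_le_iff_one_le_mul₀ (pow_pos hc 5)]
    nlinarith [h]
  have h2 : c⁻¹ ≤ x ^ ((2:ℝ)/5) := by
    apply le_of_pow_le_pow_left₀ (n := 5) (by norm_num) (Real.rpow_nonneg hx.le _)
    rw [h1]; exact h4
  have h3 : x ^ (-(2/5) : ℝ) = (x ^ ((2:ℝ)/5))⁻¹ := by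
    rw [← Real.rpow_neg hx.le]
  rw [h3]
  calc (x ^ ((2:ℝ)/5))⁻¹ ≤ (c⁻¹)⁻¹ := by apply inv_anti₀ (by positivity) h2
    _ = c := inv_inv c

lemma tele_step {u v : ℝ} (hu : 0 < u) (huv : u ≤ v) :
    (2/5) * (v - u) * v ^ (-(7/5):ℝ) ≤ u ^ (-(2/5):ℝ) - v ^ (-(2/5):ℝ) := by
  have hv : 0 < v := hu.trans_le huv
  set a := u ^ ((1:ℝ)/5) with hadef
  set b := v ^ ((1:ℝ)/5) with hbdef
  have ha : 0 < a := Real.rpow_pos_of_pos hu _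
  have hb : 0 < b := Real.rpow_pos_of_pos hv _
  have hab : a ≤ b := Real.rpow_le_rpow hu.le huv (by norm_num)
  have ha5 : a^(5:ℕ) = u := by
    rw [hadef, ← Real.rpow_natCast (u ^ ((1:ℝ)/5)) 5, ← Real.rpow_mul hu.le]
    norm_num
  have hb5 : b^(5:ℕ) = v := by
    rw [hbdef, ← Real.rpow_natCast (v ^ ((1:ℝ)/5)) 5, ← Real.rpow_mul hv.le]
    norm_num
  have hu2 : u ^ (-(2/5):ℝ) = (a^(2:ℕ))⁻¹ := by
    rw [hadef, ← Real.rpow_natCast (u ^ ((1:ℝ)/5)) 2, ← Real.rpow_mul hu.le, ← Real.rpow_neg hu.le]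
    norm_num
  have hv2 : v ^ (-(2/5):ℝ) = (b^(2:ℕ))⁻¹ := by
    rw [hbdef, ← Real.rpow_natCast (v ^ ((1:ℝ)/5)) 2, ← Real.rpow_mul hv.le, ← Real.rpow_neg hv.le]
    norm_num
  have hv7 : v ^ (-(7/5):ℝ) = (b^(7:ℕ))⁻¹ := by
    rw [hbdef, ← Real.rpow_natCast (v ^ ((1:ℝ)/5)) 7, ← Real.rpow_mul hv.le, ← Real.rpow_neg hv.le]
    norm_num
  rw [hu2, hv2, hv7, ← ha5, ← hb5]
  have key : 7*(a^2*b^5) ≤ 2*a^7+5*b^7 := amgm7 ha hab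
  rw [← sub_nonneg]
  have expand : (a ^ 2)⁻¹ - (b ^ 2)⁻¹ - 2 / 5 * (b ^ 5 - a ^ 5) * (b ^ 7)⁻¹
      = (5*(b^9 - a^2*b^7) - 2*(a^2*b^7 - a^7*b^2))/(5*a^2*b^9) := by
    field_simp
  rw [expand]
  apply div_nonneg _ (by positivity)
  nlinarith [mul_nonneg (sq_nonneg b) (sub_nonneg.2 key)]

lemma partial10 : ∑ n ∈ Finset.range 10, ((n:ℝ)+1) ^ (-(7/5):ℝ) ≤ 2.1301 := by
  have step : ∀ n ∈ Finset.range 10, ((n:ℝ)+1) ^ (-(7/5):ℝ) ≤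
      [ (1:ℝ), 0.379, 0.2149, 0.1436, 0.10507, 0.0814, 0.0656, 0.05442, 0.04614, 0.03982].getD n 0 := by
    intro n hn
    rw [Finset.mem_range] at hn
    interval_cases n <;>
      { apply rpow_n75_le (by norm_num) (by norm_num); norm_num }
  calc ∑ n ∈ Finset.range 10, ((n:ℝ)+1) ^ (-(7/5):ℝ)
      ≤ ∑ n ∈ Finset.range 10, ([ (1:ℝ), 0.379, 0.2149, 0.1436, 0.10507, 0.0814, 0.0656, 0.05442, 0.04614, 0.03982].getD n 0) := Finset.sum_le_sum step
    _ ≤ 2.1301 := by simp [Finset.sum_range_succ]; norm_num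

lemma zeta_partial (K : ℕ) : ∑ n ∈ Finset.range K, ((n:ℝ)+1) ^ (-(7/5):ℝ) ≤ 3.126 := by
  have hnn : ∀ n : ℕ, (0:ℝ) ≤ ((n:ℝ)+1) ^ (-(7/5):ℝ) := fun n =>
    Real.rpow_nonneg (by positivity) _
  have hmain : ∀ M : ℕ, 10 ≤ M → ∑ n ∈ Finset.range M, ((n:ℝ)+1) ^ (-(7/5):ℝ) ≤ 3.126 := by
    intro M hM
    rw [← Finset.sum_range_add_sum_Ico _ hM]
    have htail : ∑ n ∈ Finset.Ico 10 M, ((n:ℝ)+1) ^ (-(7/5):ℝ) ≤ 0.9955 := by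
      set g : ℕ → ℝ := fun i => (((10+i:ℕ)):ℝ) ^ (-(2/5):ℝ) with hg
      have hterm : ∀ n ∈ Finset.Ico 10 M, ((n:ℝ)+1) ^ (-(7/5):ℝ)
          ≤ (5/2) * ((n:ℝ) ^ (-(2/5):ℝ) - ((n:ℝ)+1) ^ (-(2/5):ℝ)) := by
        intro n hn
        rw [Finset.mem_Ico] at hn
        have hn0 : (0:ℝ) < n := by
          have : (10:ℝ) ≤ n := by exact_mod_cast hn.1
          linarith
        have := tele_step hn0 (by linarith : (n:ℝ) ≤ (n:ℝ)+1)
        simp only [add_sub_cancel_left] at this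
        linarith
      calc ∑ n ∈ Finset.Ico 10 M, ((n:ℝ)+1) ^ (-(7/5):ℝ)
          ≤ ∑ n ∈ Finset.Ico 10 M, (5/2) * ((n:ℝ) ^ (-(2/5):ℝ) - ((n:ℝ)+1) ^ (-(2/5):ℝ)) :=
            Finset.sum_le_sum hterm
        _ = (5/2) * ∑ i ∈ Finset.range (M-10), (g i - g (i+1)) := by
            rw [Finset.mul_sum, Finset.sum_Ico_eq_sum_range]
            apply Finset.sum_congr rfl
            intro i _
            have h1 : ((10+i:ℕ):ℝ) = ((10:ℝ)+i) := by push_cast; ring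
            have h2 : ((10+(i+1):ℕ):ℝ) = ((10:ℝ)+i)+1 := by push_cast; ring
            rw [hg]
            simp only [h1, h2]
        _ = (5/2) * (g 0 - g (M-10)) := by rw [Finset.sum_range_sub' g (M-10)]
        _ ≤ (5/2) * (0.3982 - 0) := by
            have hg0 : g 0 ≤ 0.3982 := by
              have : g 0 = (10:ℝ) ^ (-(2/5):ℝ) := by rw [hg]; norm_num
              rw [this]
              apply rpow_n25_le (by norm_num) (by norm_num)
              norm_num
            have hgM : (0:ℝ) ≤ g (M-10) := Real.rpow_nonneg (by positivity) _
            linarith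
        _ ≤ 0.9955 := by norm_num
    have h10 := partial10
    linarith
  rcases le_or_gt 10 K with hK | hK
  · exact hmain K hK
  · calc ∑ n ∈ Finset.range K, ((n:ℝ)+1) ^ (-(7/5):ℝ)
        ≤ ∑ n ∈ Finset.range 10, ((n:ℝ)+1) ^ (-(7/5):ℝ) :=
          Finset.sum_le_sum_of_subset_of_nonneg (Finset.range_subset_range.2 hK.le) (fun n _ _ => hnn n)
      _ ≤ 3.126 := hmain 10 le_rfl

lemma log2_rpow_bound : (Real.log 2) ^ (-(7/5):ℝ) ≤ 1.671 := by
  have hb := Real.log_two_gt_d9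
  have hpos : (0:ℝ) < Real.log 2 := by norm_num at hb ⊢; linarith
  apply rpow_n75_le hpos (by norm_num)
  have h7 : (0.6931471803:ℝ)^7 ≤ (Real.log 2)^7 := by
    apply pow_le_pow_left₀ (by norm_num) hb.le
  nlinarith [h7]

lemma series_bound (K : ℕ) :
    ∑ k ∈ Finset.range K, (((k:ℝ)+1) * Real.log 2) ^ (-(7/5):ℝ) ≤ 5.25 := by
  have hb := Real.log_two_gt_d9
  have hpos : (0:ℝ) < Real.log 2 := by norm_num at hb ⊢; linarith
  have hsplit : ∀ k : ℕ, (((k:ℝ)+1) * Real.log 2) ^ (-(7/5):ℝ)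
      = ((k:ℝ)+1) ^ (-(7/5):ℝ) * (Real.log 2) ^ (-(7/5):ℝ) :=
    fun k => Real.mul_rpow (by positivity) hpos.le
  calc ∑ k ∈ Finset.range K, (((k:ℝ)+1) * Real.log 2) ^ (-(7/5):ℝ)
      = (∑ k ∈ Finset.range K, ((k:ℝ)+1) ^ (-(7/5):ℝ)) * (Real.log 2) ^ (-(7/5):ℝ) := by
        rw [Finset.sum_mul]; exact Finset.sum_congr rfl fun k _ => hsplit k
    _ ≤ 3.126 * 1.671 := by
        apply mul_le_mul (zeta_partial K) log2_rpow_bound (Real.rpow_nonneg hpos.le _)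
        norm_num
    _ ≤ 5.25 := by norm_num

lemma hoeffding_finset {α : Type*} (s : Finset α) (q a : α → ℝ) (c : ℝ)
    (hq0 : ∀ i ∈ s, 0 ≤ q i) (hq1 : ∑ i ∈ s, q i = 1)
    (ha : ∀ i ∈ s, |a i| ≤ 1) (hmean : ∑ i ∈ s, q i * a i = 0) :
    ∑ i ∈ s, q i * Real.exp (c * a i) ≤ Real.exp (c^2/2) := by
  have key : ∀ i ∈ s, Real.exp (c * a i) ≤ Real.cosh c + a i * Real.sinh c := by
    intro i hi
    have h1 : -1 ≤ a i := (abs_le.1 (ha i hi)).1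
    have h2 : a i ≤ 1 := (abs_le.1 (ha i hi)).2
    have := convexOn_exp.2 (Set.mem_univ (-c)) (Set.mem_univ c)
      (by linarith : (0:ℝ) ≤ (1 - a i)/2) (by linarith : (0:ℝ) ≤ (1 + a i)/2)
      (by ring : (1 - a i)/2 + (1 + a i)/2 = 1)
    simp only [smul_eq_mul] at this
    have harg : (1 - a i)/2 * (-c) + (1 + a i)/2 * c = c * a i := by ring
    rw [harg] at this
    refine this.trans_eq ?_
    rw [Real.cosh_eq, Real.sinh_eq]
    ring
  calc ∑ i ∈ s, q i * Real.exp (c * a i)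
      ≤ ∑ i ∈ s, q i * (Real.cosh c + a i * Real.sinh c) := by
        apply Finset.sum_le_sum
        intro i hi
        exact mul_le_mul_of_nonneg_left (key i hi) (hq0 i hi)
    _ = (∑ i ∈ s, q i) * Real.cosh c + (∑ i ∈ s, q i * a i) * Real.sinh c := by
        rw [Finset.sum_mul, Finset.sum_mul, ← Finset.sum_add_distrib]
        apply Finset.sum_congr rfl
        intro i _
        ring
    _ = Real.cosh c := by rw [hq1, hmean]; ring
    _ ≤ Real.exp (c^2/2) := Real.cosh_le_exp_half_sq c

open MeasureTheory

lemma ville {Ω : Type*} [m0 : MeasurableSpace Ω] {μ : Measure Ω} [IsFiniteMeasure μ]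
    {𝒢 : Filtration ℕ m0} {f : ℕ → Ω → ℝ} (hf : Supermartingale f 𝒢 μ)
    (hnonneg : ∀ t ω, 0 ≤ f t ω) {r : ℝ} (hr : 0 < r) (n : ℕ) :
    μ {ω | ∃ t ≤ n, r ≤ f t ω} ≤ ENNReal.ofReal ((∫ ω, f 0 ω ∂μ) / r) := by
  classical
  set τ : Ω → ℕ∞ := fun ω => ((hittingBtwn f (Set.Ici r) 0 n ω : ℕ) : ℕ∞) with hτdef
  have hτ : IsStoppingTime 𝒢 τ :=
    Adapted.isStoppingTime_hittingBtwn hf.stronglyAdapted.adapted measurableSet_Ici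
  set A := {ω | ∃ t ≤ n, r ≤ f t ω} with hA
  have hAmeas : MeasurableSet A := by
    have : A = ⋃ (t : ℕ) (_ : t ≤ n), {ω | r ≤ f t ω} := by
      ext ω; simp [hA]
    rw [this]
    refine MeasurableSet.iUnion fun t => MeasurableSet.iUnion fun _ => ?_
    exact measurableSet_le measurable_const
      ((hf.stronglyMeasurable t).measurable.le (𝒢.le t))
  have hsv_int : Integrable (stoppedValue f τ) μ :=
    integrable_stoppedValue ℕ hτ hf.integrable (fun ω => WithTop.coe_le_coe.2 (hittingBtwn_le ω))
  have hsv_ge : ∀ ω ∈ A, r ≤ stoppedValue f τ ω := by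
    intro ω hω
    obtain ⟨t, ht, hrt⟩ := hω
    have hmem : ∃ j ∈ Set.Icc 0 n, f j ω ∈ Set.Ici r := ⟨t, ⟨Nat.zero_le _, ht⟩, hrt⟩
    exact stoppedValue_hittingBtwn_mem hmem
  have h1 : r * (μ A).toReal ≤ ∫ ω in A, stoppedValue f τ ω ∂μ :=
    by
      have := setIntegral_ge_of_const_le hAmeas (measure_ne_top μ A) hsv_ge hsv_int.integrableOn
      rw [smul_eq_mul, mul_comm] at this
      exact this
  have h2 : ∫ ω in A, stoppedValue f τ ω ∂μ ≤ ∫ ω, stoppedValue f τ ω ∂μ :=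
    setIntegral_le_integral hsv_int
      (Filter.Eventually.of_forall fun ω => hnonneg _ ω)
  have h3 : ∫ ω, stoppedValue f τ ω ∂μ ≤ ∫ ω, f 0 ω ∂μ := by
    have hneg := hf.neg
    have := hneg.expected_stoppedValue_mono (isStoppingTime_const 𝒢 0) hτ
      (fun ω => WithTop.coe_le_coe.2 (Nat.zero_le _))
      (fun ω => WithTop.coe_le_coe.2 (hittingBtwn_le ω) : ∀ ω, τ ω ≤ n)
    have heq0 : stoppedValue (-f) (fun _ => ((0:ℕ) : WithTop ℕ)) = fun ω => -(f 0 ω) :=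
      stoppedValue_const _ _
    have heqτ : stoppedValue (-f) τ = fun ω => -(stoppedValue f τ ω) := rfl
    have key : -∫ x, f 0 x ∂μ ≤ -∫ ω, stoppedValue f τ ω ∂μ := by
      have e0 : ∫ x, stoppedValue (-f) (fun _ => ((0:ℕ) : WithTop ℕ)) x ∂μ = -∫ x, f 0 x ∂μ := by
        rw [heq0, integral_neg]
      rw [← e0, ← integral_neg]
      exact this
    linarith [key]
  have h4 : (μ A).toReal ≤ (∫ ω, f 0 ω ∂μ) / r := by
    rw [le_div_iff₀ hr]
    nlinarith [h1, h2, h3]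
  calc μ A = ENNReal.ofReal (μ A).toReal := (ENNReal.ofReal_toReal (measure_ne_top μ A)).symm
    _ ≤ ENNReal.ofReal ((∫ ω, f 0 ω ∂μ) / r) := ENNReal.ofReal_le_ofReal h4


namespace RLFA

variable {Ω : Type*}

/-- The control variate `U_t = S(I_t) − Σ_{i ∈ N_t} q_t(i) S(i)`. -/
def Ut {N : ℕ} (S : Fin N → ℝ) (q : ℕ → Ω → Fin N → ℝ) (I : ℕ → Ω → Fin N)
    (t : ℕ) (ω : Ω) : ℝ :=
  S (I t ω) - ∑ i ∈ remaining I t ω, q t ω i * S i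

/-- The process `D_t = Σ_{i=1}^t β_i U_i`. -/
def Dproc {N : ℕ} (S : Fin N → ℝ) (q : ℕ → Ω → Fin N → ℝ) (I : ℕ → Ω → Fin N)
    (β : ℕ → Ω → ℝ) (t : ℕ) (ω : Ω) : ℝ :=
  ∑ i ∈ Finset.Icc 1 t, β i ω * Ut S q I i ω

section Prob
variable [m0 : MeasurableSpace Ω] {N : ℕ} {I : ℕ → Ω → Fin N}

lemma meas_I_top (hI : ∀ t, Measurable (I t)) (j : ℕ) :
    @Measurable Ω (Fin N) m0 ⊤ (I j) := fun s _ => hI j (by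
  exact MeasurableSet.of_discrete)

/-- the filtration as a `Filtration` structure -/
def filtr (I : ℕ → Ω → Fin N) (hI : ∀ t, Measurable (I t)) : Filtration ℕ m0 where
  seq := filt I
  mono' := by
    intro s t hst
    apply biSup_mono
    intro j hj
    rw [Finset.mem_Icc] at hj ⊢
    exact ⟨hj.1, hj.2.trans hst⟩
  le' := by
    intro t
    apply iSup_le; intro j; apply iSup_le; intro _
    exact Measurable.comap_le (meas_I_top hI j)

lemma meas_I_filt (j t : ℕ) (hj : j ∈ Finset.Icc 1 t) :
    @Measurable Ω (Fin N) (filt I t) _ (I j) := by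
  have h1 : MeasurableSpace.comap (I j) ⊤ ≤ filt I t :=
    le_iSup₂ (f := fun (j : ℕ) (_ : j ∈ Finset.Icc 1 t) => MeasurableSpace.comap (I j) ⊤) j hj
  intro s _
  apply h1
  exact ⟨s, trivial, rfl⟩

lemma measSet_mem_remaining (i : Fin N) (t : ℕ) :
    MeasurableSet[filt I (t-1)] {ω | i ∈ remaining I t ω} := by
  have : {ω | i ∈ remaining I t ω} = ⋂ j ∈ Finset.Icc 1 (t-1), {ω | I j ω ≠ i} := by
    ext ω
    simp [remaining, Set.mem_iInter, eq_comm]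
  rw [this]
  refine MeasurableSet.biInter (Finset.Icc 1 (t-1) : Finset ℕ).countable_toSet fun j hj => ?_
  exact (meas_I_filt j (t-1) hj (MeasurableSet.of_discrete (s := {i}))).compl


def Cfun {N : ℕ} (S : Fin N → ℝ) (q : ℕ → Ω → Fin N → ℝ) (I : ℕ → Ω → Fin N)
    (t : ℕ) (ω : Ω) : ℝ :=
  ∑ i ∈ remaining I t ω, q t ω i * S i

lemma Ut_eq {N : ℕ} (S : Fin N → ℝ) (q : ℕ → Ω → Fin N → ℝ) (I : ℕ → Ω → Fin N) (t : ℕ) :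
    Ut S q I t = fun ω => S (I t ω) - Cfun S q I t ω := rfl

variable {S : Fin N → ℝ} {q : ℕ → Ω → Fin N → ℝ}

lemma Cfun_SM {t : ℕ}
    (hq : ∀ i, StronglyMeasurable[filt I (t-1)] fun ω => q t ω i) :
    StronglyMeasurable[filt I (t-1)] (Cfun S q I t) := by
  have heq : Cfun S q I t = fun ω =>
      ∑ i ∈ Finset.univ, (if i ∈ remaining I t ω then q t ω i * S i else 0) := by
    funext ω
    rw [Finset.sum_ite_mem, Finset.univ_inter]; rfl
  rw [heq]
  apply Finset.stronglyMeasurable_fun_sum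
  intro i _
  exact StronglyMeasurable.ite (measSet_mem_remaining i t) ((hq i).mul_const (S i))
    stronglyMeasurable_const

lemma SIt_meas (hI : ∀ t, Measurable (I t)) (t : ℕ) (ht : 1 ≤ t) :
    StronglyMeasurable[filt I t] fun ω => S (I t ω) := by
  have h1 : @Measurable Ω (Fin N) (filt I t) _ (I t) :=
    meas_I_filt t t (Finset.mem_Icc.2 ⟨ht, le_rfl⟩)
  have h2 : @Measurable (Fin N) ℝ ⊤ _ S := measurable_of_countable S
  exact (h2.comp h1).stronglyMeasurable

lemma Cfun_mem {t : ℕ} {ω : Ω} (ht1 : 1 ≤ t) (htN : t ≤ N)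
    (hq_pos : ∀ t ω, 1 ≤ t → t ≤ N → ∀ i ∈ remaining I t ω, 0 < q t ω i)
    (hq_sum : ∀ t ω, 1 ≤ t → t ≤ N → ∑ i ∈ remaining I t ω, q t ω i = 1)
    (hS : ∀ i, S i ∈ Set.Icc (0 : ℝ) 1) :
    Cfun S q I t ω ∈ Set.Icc (0:ℝ) 1 := by
  constructor
  · apply Finset.sum_nonneg
    intro i hi
    exact mul_nonneg (hq_pos t ω ht1 htN i hi).le (hS i).1
  · calc ∑ i ∈ remaining I t ω, q t ω i * S i
        ≤ ∑ i ∈ remaining I t ω, q t ω i := by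
          apply Finset.sum_le_sum
          intro i hi
          nlinarith [(hq_pos t ω ht1 htN i hi).le, (hS i).1, (hS i).2]
      _ = 1 := hq_sum t ω ht1 htN

lemma Ut_abs_le {t : ℕ} {ω : Ω} (ht1 : 1 ≤ t) (htN : t ≤ N)
    (hq_pos : ∀ t ω, 1 ≤ t → t ≤ N → ∀ i ∈ remaining I t ω, 0 < q t ω i)
    (hq_sum : ∀ t ω, 1 ≤ t → t ≤ N → ∑ i ∈ remaining I t ω, q t ω i = 1)
    (hS : ∀ i, S i ∈ Set.Icc (0 : ℝ) 1) :
    |Ut S q I t ω| ≤ 1 := by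
  have hC := Cfun_mem (I := I) ht1 htN hq_pos hq_sum hS (ω := ω)
  have hSI := hS (I t ω)
  have heq : Ut S q I t ω = S (I t ω) - Cfun S q I t ω := rfl
  rw [heq, abs_le]
  exact ⟨by linarith [hSI.1, hC.2], by linarith [hSI.2, hC.1]⟩

variable {β : ℕ → Ω → ℝ}

lemma Dproc_abs_le {m : ℕ} {ω : Ω} (hm : m ≤ N)
    (hq_pos : ∀ t ω, 1 ≤ t → t ≤ N → ∀ i ∈ remaining I t ω, 0 < q t ω i)
    (hq_sum : ∀ t ω, 1 ≤ t → t ≤ N → ∑ i ∈ remaining I t ω, q t ω i = 1)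
    (hS : ∀ i, S i ∈ Set.Icc (0 : ℝ) 1)
    (hβ_bdd : ∀ t ω, β t ω ∈ Set.Icc (-1 : ℝ) 1) :
    |Dproc S q I β m ω| ≤ m := by
  calc |Dproc S q I β m ω| ≤ ∑ i ∈ Finset.Icc 1 m, |β i ω * Ut S q I i ω| :=
      Finset.abs_sum_le_sum_abs _ _
    _ ≤ ∑ i ∈ Finset.Icc 1 m, 1 := by
        apply Finset.sum_le_sum
        intro i hi
        rw [Finset.mem_Icc] at hi
        rw [abs_mul]
        have h1 : |β i ω| ≤ 1 := abs_le.2 ⟨(hβ_bdd i ω).1, (hβ_bdd i ω).2⟩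
        have h2 : |Ut S q I i ω| ≤ 1 := Ut_abs_le hi.1 (hi.2.trans hm) hq_pos hq_sum hS
        nlinarith [abs_nonneg (β i ω), abs_nonneg (Ut S q I i ω)]
    _ ≤ m := by
        rw [Finset.sum_const, Nat.card_Icc]
        simp

lemma Dproc_SM (hI : ∀ t, Measurable (I t)) {m : ℕ} (hm : m ≤ N)
    (hq_meas : ∀ t, 1 ≤ t → t ≤ N → ∀ i, StronglyMeasurable[filt I (t - 1)] fun ω => q t ω i)
    (hβ_meas : ∀ t, 1 ≤ t → t ≤ N → StronglyMeasurable[filt I (t - 1)] (β t)) :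
    StronglyMeasurable[filt I m] (Dproc S q I β m) := by
  apply Finset.stronglyMeasurable_fun_sum
  intro i hi
  rw [Finset.mem_Icc] at hi
  have hle : filt I (i-1) ≤ filt I m := (filtr I hI).mono ((i.sub_le 1).trans hi.2)
  have hle2 : filt I i ≤ filt I m := (filtr I hI).mono hi.2
  apply StronglyMeasurable.mul
  · exact ((hβ_meas i hi.1 (hi.2.trans hm)).mono hle)
  · rw [Ut_eq]
    apply StronglyMeasurable.sub
    · exact (SIt_meas hI i hi.1).mono hle2
    · exact ((Cfun_SM (hq_meas i hi.1 (hi.2.trans hm))).mono hle)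


lemma integrable_of_bdd {μ : Measure Ω} [IsFiniteMeasure μ] {f : Ω → ℝ} {C : ℝ}
    (hf : AEStronglyMeasurable f μ) (h : ∀ ω, |f ω| ≤ C) :
    Integrable f μ :=
  (integrable_const C).mono' hf (Filter.Eventually.of_forall h)

lemma condexp_exp_le {μ : Measure Ω} [IsProbabilityMeasure μ]
    (hq_meas : ∀ t, 1 ≤ t → t ≤ N → ∀ i, StronglyMeasurable[filt I (t - 1)] fun ω => q t ω i)
    (hq_pos : ∀ t ω, 1 ≤ t → t ≤ N → ∀ i ∈ remaining I t ω, 0 < q t ω i)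
    (hq_sum : ∀ t ω, 1 ≤ t → t ≤ N → ∑ i ∈ remaining I t ω, q t ω i = 1)
    (hcond : ∀ t, 1 ≤ t → t ≤ N → ∀ G : Ω → Fin N → ℝ,
      (∀ i, StronglyMeasurable[filt I (t - 1)] fun ω => G ω i) →
      μ[(fun ω => G ω (I t ω)) | filt I (t - 1)]
        =ᵐ[μ] fun ω => ∑ i ∈ remaining I t ω, q t ω i * G ω i)
    (hS : ∀ i, S i ∈ Set.Icc (0 : ℝ) 1)
    (hβ_meas : ∀ t, 1 ≤ t → t ≤ N → StronglyMeasurable[filt I (t - 1)] (β t))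
    (hβ_bdd : ∀ t ω, β t ω ∈ Set.Icc (-1 : ℝ) 1)
    (t : ℕ) (ht1 : 1 ≤ t) (htN : t ≤ N) (c : ℝ) :
    μ[fun ω => Real.exp (c * (β t ω * Ut S q I t ω)) | filt I (t-1)]
      ≤ᵐ[μ] fun _ => Real.exp (c^2/2) := by
  set G : Ω → Fin N → ℝ := fun ω i => Real.exp (c * (β t ω * (S i - Cfun S q I t ω))) with hG
  have hGmeas : ∀ i, StronglyMeasurable[filt I (t-1)] fun ω => G ω i := by
    intro i
    apply Real.continuous_exp.comp_stronglyMeasurable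
    exact stronglyMeasurable_const.mul ((hβ_meas t ht1 htN).mul
      (stronglyMeasurable_const.sub (Cfun_SM (hq_meas t ht1 htN))))
  have heq : (fun ω => Real.exp (c * (β t ω * Ut S q I t ω))) = fun ω => G ω (I t ω) := rfl
  rw [heq]
  refine (hcond t ht1 htN G hGmeas).le.trans (Filter.Eventually.of_forall fun ω => ?_)
  have hC := Cfun_mem (I := I) (S := S) (q := q) ht1 htN hq_pos hq_sum hS (ω := ω)
  have hβ1 : |β t ω| ≤ 1 := abs_le.2 ⟨(hβ_bdd t ω).1, (hβ_bdd t ω).2⟩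
  have ha : ∀ i ∈ remaining I t ω, |β t ω * (S i - Cfun S q I t ω)| ≤ 1 := by
    intro i _
    rw [abs_mul]
    have h2 : |S i - Cfun S q I t ω| ≤ 1 := by
      rw [abs_le]
      exact ⟨by linarith [(hS i).1, hC.2], by linarith [(hS i).2, hC.1]⟩
    nlinarith [abs_nonneg (β t ω), abs_nonneg (S i - Cfun S q I t ω)]
  have hmean : ∑ i ∈ remaining I t ω, q t ω i * (β t ω * (S i - Cfun S q I t ω)) = 0 := by
    have hsplit : ∀ i ∈ remaining I t ω,
        q t ω i * (β t ω * (S i - Cfun S q I t ω))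
          = β t ω * (q t ω i * S i) - (β t ω * Cfun S q I t ω) * q t ω i := fun i _ => by ring
    rw [Finset.sum_congr rfl hsplit, Finset.sum_sub_distrib, ← Finset.mul_sum, ← Finset.mul_sum]
    rw [hq_sum t ω ht1 htN]
    have : ∑ i ∈ remaining I t ω, q t ω i * S i = Cfun S q I t ω := rfl
    rw [this]
    ring
  exact hoeffding_finset (remaining I t ω) (q t ω)
    (fun i => β t ω * (S i - Cfun S q I t ω)) c
    (fun i hi => (hq_pos t ω ht1 htN i hi).le) (hq_sum t ω ht1 htN) ha hmean

noncomputable def Mproc {N : ℕ} (S : Fin N → ℝ) (q : ℕ → Ω → Fin N → ℝ) (I : ℕ → Ω → Fin N)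
    (β : ℕ → Ω → ℝ) (N' : ℕ) (c : ℝ) (t : ℕ) (ω : Ω) : ℝ :=
  Real.exp (c * Dproc S q I β (min t N') ω - c^2 * (min t N') / 2)

lemma Mproc_pos {c : ℝ} {t : ℕ} {ω : Ω} : 0 < Mproc S q I β N c t ω := Real.exp_pos _

lemma Mproc_SM (hI : ∀ t, Measurable (I t))
    (hq_meas : ∀ t, 1 ≤ t → t ≤ N → ∀ i, StronglyMeasurable[filt I (t - 1)] fun ω => q t ω i)
    (hβ_meas : ∀ t, 1 ≤ t → t ≤ N → StronglyMeasurable[filt I (t - 1)] (β t))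
    (c : ℝ) (t : ℕ) :
    StronglyMeasurable[filt I t] (Mproc S q I β N c t) := by
  apply Real.continuous_exp.comp_stronglyMeasurable
  apply StronglyMeasurable.sub _ stronglyMeasurable_const
  apply StronglyMeasurable.const_mul
  exact (Dproc_SM hI (min_le_right t N) hq_meas hβ_meas).mono
    ((filtr I hI).mono (min_le_left t N))

lemma Mproc_bdd
    (hq_pos : ∀ t ω, 1 ≤ t → t ≤ N → ∀ i ∈ remaining I t ω, 0 < q t ω i)
    (hq_sum : ∀ t ω, 1 ≤ t → t ≤ N → ∑ i ∈ remaining I t ω, q t ω i = 1)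
    (hS : ∀ i, S i ∈ Set.Icc (0 : ℝ) 1)
    (hβ_bdd : ∀ t ω, β t ω ∈ Set.Icc (-1 : ℝ) 1)
    (c : ℝ) (t : ℕ) (ω : Ω) :
    |Mproc S q I β N c t ω| ≤ Real.exp (|c| * N) := by
  rw [abs_of_pos Mproc_pos]
  apply Real.exp_le_exp.2
  have hD := Dproc_abs_le (I := I) (m := min t N) (ω := ω) (min_le_right t N)
    hq_pos hq_sum hS hβ_bdd
  have h1 : c * Dproc S q I β (min t N) ω ≤ |c| * N := by
    calc c * Dproc S q I β (min t N) ω ≤ |c * Dproc S q I β (min t N) ω| := le_abs_self _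
      _ = |c| * |Dproc S q I β (min t N) ω| := abs_mul _ _
      _ ≤ |c| * ((min t N : ℕ) : ℝ) := by
          apply mul_le_mul_of_nonneg_left hD (abs_nonneg c)
      _ ≤ |c| * N := by
          apply mul_le_mul_of_nonneg_left _ (abs_nonneg c)
          exact_mod_cast Nat.cast_le.2 (min_le_right t N)
  nlinarith [sq_nonneg c, (Nat.cast_nonneg (min t N) : (0:ℝ) ≤ ((min t N : ℕ) : ℝ))]


lemma Mproc_integrable {μ : Measure Ω} [IsProbabilityMeasure μ]
    (hI : ∀ t, Measurable (I t))
    (hq_meas : ∀ t, 1 ≤ t → t ≤ N → ∀ i, StronglyMeasurable[filt I (t - 1)] fun ω => q t ω i)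
    (hq_pos : ∀ t ω, 1 ≤ t → t ≤ N → ∀ i ∈ remaining I t ω, 0 < q t ω i)
    (hq_sum : ∀ t ω, 1 ≤ t → t ≤ N → ∑ i ∈ remaining I t ω, q t ω i = 1)
    (hS : ∀ i, S i ∈ Set.Icc (0 : ℝ) 1)
    (hβ_meas : ∀ t, 1 ≤ t → t ≤ N → StronglyMeasurable[filt I (t - 1)] (β t))
    (hβ_bdd : ∀ t ω, β t ω ∈ Set.Icc (-1 : ℝ) 1)
    (c : ℝ) (t : ℕ) :
    Integrable (Mproc S q I β N c t) μ :=
  integrable_of_bdd (((Mproc_SM hI hq_meas hβ_meas c t).mono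
    ((filtr I hI).le t)).aestronglyMeasurable)
    (Mproc_bdd hq_pos hq_sum hS hβ_bdd c t)

lemma Mproc_supermartingale {μ : Measure Ω} [IsProbabilityMeasure μ]
    (hI : ∀ t, Measurable (I t))
    (hq_meas : ∀ t, 1 ≤ t → t ≤ N → ∀ i, StronglyMeasurable[filt I (t - 1)] fun ω => q t ω i)
    (hq_pos : ∀ t ω, 1 ≤ t → t ≤ N → ∀ i ∈ remaining I t ω, 0 < q t ω i)
    (hq_sum : ∀ t ω, 1 ≤ t → t ≤ N → ∑ i ∈ remaining I t ω, q t ω i = 1)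
    (hcond : ∀ t, 1 ≤ t → t ≤ N → ∀ G : Ω → Fin N → ℝ,
      (∀ i, StronglyMeasurable[filt I (t - 1)] fun ω => G ω i) →
      μ[(fun ω => G ω (I t ω)) | filt I (t - 1)]
        =ᵐ[μ] fun ω => ∑ i ∈ remaining I t ω, q t ω i * G ω i)
    (hS : ∀ i, S i ∈ Set.Icc (0 : ℝ) 1)
    (hβ_meas : ∀ t, 1 ≤ t → t ≤ N → StronglyMeasurable[filt I (t - 1)] (β t))
    (hβ_bdd : ∀ t ω, β t ω ∈ Set.Icc (-1 : ℝ) 1)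
    (c : ℝ) :
    Supermartingale (Mproc S q I β N c) (filtr I hI) μ := by
  have hint : ∀ t, Integrable (Mproc S q I β N c t) μ := fun t =>
    Mproc_integrable hI hq_meas hq_pos hq_sum hS hβ_meas hβ_bdd c t
  apply supermartingale_nat
  · exact fun t => Mproc_SM hI hq_meas hβ_meas c t
  · exact hint
  · intro i
    rcases le_or_gt N i with hNi | hiN
    · -- constant case
      have heq : Mproc S q I β N c (i+1) = Mproc S q I β N c i := by
        funext ω
        have h1 : min (i+1) N = N := min_eq_right (hNi.trans (Nat.le_succ i))
        have h2 : min i N = N := min_eq_right hNi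
        simp only [Mproc, h1, h2]
      rw [heq]
      exact (Filter.EventuallyEq.of_eq (condExp_of_stronglyMeasurable ((filtr I hI).le i)
        (Mproc_SM hI hq_meas hβ_meas c i) (hint i))).le
    · -- genuine step
      have ht1 : 1 ≤ i + 1 := Nat.succ_le_succ (Nat.zero_le i)
      have htN : i + 1 ≤ N := hiN
      have hmin1 : min (i+1) N = i+1 := min_eq_left htN
      have hmin2 : min i N = i := min_eq_left hiN.le
      set X : Ω → ℝ := fun ω => β (i+1) ω * Ut S q I (i+1) ω with hX
      have hdecomp : Mproc S q I β N c (i+1)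
          = (fun ω => Mproc S q I β N c i ω * Real.exp (-(c^2)/2)) * fun ω => Real.exp (c * X ω) := by
        funext ω
        simp only [Mproc, hmin1, hmin2, Pi.mul_apply]
        rw [← Real.exp_add, ← Real.exp_add]
        congr 1
        have hsum : Dproc S q I β (i+1) ω = Dproc S q I β i ω + X ω := by
          rw [Dproc, Finset.sum_Icc_succ_top (Nat.one_le_iff_ne_zero.2 (Nat.succ_ne_zero i))]
          rfl
        rw [hsum]
        push_cast
        ring
      have hXbdd : ∀ ω, |Real.exp (c * X ω)| ≤ Real.exp |c| := by
        intro ω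
        rw [abs_of_pos (Real.exp_pos _), Real.exp_le_exp]
        have h1 : |β (i+1) ω| ≤ 1 := abs_le.2 ⟨(hβ_bdd _ ω).1, (hβ_bdd _ ω).2⟩
        have h2 : |Ut S q I (i+1) ω| ≤ 1 := Ut_abs_le ht1 htN hq_pos hq_sum hS
        calc c * X ω ≤ |c * X ω| := le_abs_self _
          _ = |c| * (|β (i+1) ω| * |Ut S q I (i+1) ω|) := by rw [abs_mul, hX, abs_mul]
          _ ≤ |c| * 1 := by
              apply mul_le_mul_of_nonneg_left _ (abs_nonneg c)
              nlinarith [abs_nonneg (β (i+1) ω), abs_nonneg (Ut S q I (i+1) ω)]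
          _ = |c| := mul_one _
      have hXSM : StronglyMeasurable[filt I (i+1)] fun ω => Real.exp (c * X ω) := by
        apply Real.continuous_exp.comp_stronglyMeasurable
        apply StronglyMeasurable.const_mul
        apply StronglyMeasurable.mul
        · exact (hβ_meas (i+1) ht1 htN).mono ((filtr I hI).mono (Nat.sub_le _ _))
        · rw [Ut_eq]
          apply StronglyMeasurable.sub
          · exact SIt_meas hI (i+1) ht1
          · exact (Cfun_SM (hq_meas (i+1) ht1 htN)).mono
              ((filtr I hI).mono (Nat.sub_le _ _))
      have hXint : Integrable (fun ω => Real.exp (c * X ω)) μ :=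
        integrable_of_bdd ((hXSM.mono ((filtr I hI).le (i+1))).aestronglyMeasurable) hXbdd
      have hfSM : StronglyMeasurable[(filtr I hI) i]
          fun ω => Mproc S q I β N c i ω * Real.exp (-(c^2)/2) :=
        (Mproc_SM hI hq_meas hβ_meas c i).mul_const _
      have hfgint : Integrable
          ((fun ω => Mproc S q I β N c i ω * Real.exp (-(c^2)/2)) * fun ω => Real.exp (c * X ω)) μ := by
        rw [← hdecomp]
        exact hint (i+1)
      have hmul := condExp_mul_of_stronglyMeasurable_left hfSM hfgint hXint
      have hkey : μ[(fun ω => Real.exp (c * X ω)) | (filtr I hI) i]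
          ≤ᵐ[μ] fun _ => Real.exp (c^2/2) := by
        have := condexp_exp_le (I := I) hq_meas hq_pos hq_sum hcond hS hβ_meas hβ_bdd
          (i+1) ht1 htN c
        simp only [Nat.add_sub_cancel] at this
        exact this
      rw [hdecomp]
      refine hmul.trans_le ?_
      filter_upwards [hkey] with ω hω
      simp only [Pi.mul_apply]
      have hpos : (0:ℝ) < Mproc S q I β N c i ω * Real.exp (-(c^2)/2) :=
        mul_pos Mproc_pos (Real.exp_pos _)
      calc (Mproc S q I β N c i ω * Real.exp (-(c^2)/2)) * (μ[(fun ω => Real.exp (c * X ω)) | (filtr I hI) i]) ω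
          ≤ (Mproc S q I β N c i ω * Real.exp (-(c^2)/2)) * Real.exp (c^2/2) :=
            mul_le_mul_of_nonneg_left hω hpos.le
        _ = Mproc S q I β N c i ω := by
            rw [mul_assoc, ← Real.exp_add,
              show -c^2/2 + c^2/2 = 0 by ring, Real.exp_zero, mul_one]

end Prob

lemma loglog2_ge : -(0.367:ℝ) ≤ Real.log (Real.log 2) := by
  have hgt := Real.log_two_gt_d9
  have hlt := Real.log_two_lt_d9
  have hpos : (0:ℝ) < Real.log 2 := by norm_num at hgt ⊢; linarith
  have h1 : (1/1.4427 : ℝ) ≤ Real.log 2 := by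
    norm_num at hgt ⊢
    linarith
  have h2 : Real.log (1/1.4427 : ℝ) ≤ Real.log (Real.log 2) :=
    Real.log_le_log (by norm_num) h1
  have h3 : Real.log (1/1.4427 : ℝ) = - Real.log 1.4427 := by
    rw [one_div, Real.log_inv]
  have h4 : Real.log (1.4427:ℝ) ≤ 0.367 := by
    have h5 : (2:ℝ) * Real.log (1.4427:ℝ) = Real.log (2.08138329) := by
      rw [show (2.08138329:ℝ) = 1.4427^2 by norm_num, Real.log_pow]
      push_cast; ring
    have h6 : Real.log (2.08138329:ℝ) = Real.log 2 + Real.log (1.040691645) := by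
      rw [← Real.log_mul (by norm_num) (by norm_num)]; norm_num
    have h7 : Real.log (1.040691645:ℝ) ≤ 0.040691645 := by
      have := Real.log_le_sub_one_of_pos (by norm_num : (0:ℝ) < 1.040691645)
      linarith
    linarith
  linarith

set_option maxHeartbeats 1000000 in
lemma epoch_bound {δ : ℝ} (hδ : δ ∈ Set.Ioo (0:ℝ) 1) (k t : ℕ) (ht1 : 1 ≤ t)
    (hlow : 2^k ≤ t) (thigh : t < 2^(k+1)) :
    (7/5) * Real.log (((k:ℝ)+1) * Real.log 2) + Real.log (10.5/δ)
      ≤ Real.sqrt (2 * ((7/5) * Real.log (((k:ℝ)+1) * Real.log 2) + Real.log (10.5/δ))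
            / ((2:ℝ)^k * Real.sqrt 2))
          * (1.7 * Real.sqrt ((t:ℝ) *
              (Real.log (Real.log (2*(t:ℝ))) + 0.72 * Real.log (10.4/δ))))
        - (Real.sqrt (2 * ((7/5) * Real.log (((k:ℝ)+1) * Real.log 2) + Real.log (10.5/δ))
            / ((2:ℝ)^k * Real.sqrt 2)))^2 * (t:ℝ) / 2 := by
  have hgt := Real.log_two_gt_d9
  have hl2pos : (0:ℝ) < Real.log 2 := by norm_num at hgt ⊢; linarith
  set A := Real.log (((k:ℝ)+1) * Real.log 2) with hAdef
  set L4 := Real.log (10.4:ℝ) with hL4def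
  set L5 := Real.log (10.5:ℝ) with hL5def
  set Ld := - Real.log δ with hLddef
  set B := Real.log (Real.log (2*(t:ℝ))) with hBdef
  set s2 := Real.sqrt 2 with hs2def
  have hs2sq : s2^2 = 2 := Real.sq_sqrt (by norm_num)
  have hs2pos : (0:ℝ) < s2 := Real.sqrt_pos.2 (by norm_num)
  have hs2u : s2 ≤ 1.4142136 := by nlinarith [hs2sq, hs2pos]
  have hs2l : (1.4142135:ℝ) ≤ s2 := by nlinarith [hs2sq, hs2pos]
  -- A ≥ -0.367
  have hA : -(0.367:ℝ) ≤ A := by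
    have h1 : Real.log 2 ≤ ((k:ℝ)+1) * Real.log 2 := by
      nlinarith [hl2pos, Nat.cast_nonneg (α := ℝ) k]
    have h2 : Real.log (Real.log 2) ≤ A := Real.log_le_log hl2pos h1
    linarith [loglog2_ge]
  -- L4 ≥ 3 log 2
  have hL4 : (2.0794415:ℝ) ≤ L4 := by
    have h1 : Real.log (8:ℝ) ≤ L4 := Real.log_le_log (by norm_num) (by norm_num)
    have h2 : Real.log (8:ℝ) = 3 * Real.log 2 := by
      rw [show (8:ℝ) = 2^3 by norm_num, Real.log_pow]; push_cast; ring
    norm_num at hgt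
    linarith
  have hL45 : L5 ≤ L4 + 1/104 := by
    have h1 : L5 - L4 = Real.log (10.5/10.4) := by
      rw [Real.log_div (by norm_num) (by norm_num)]
    have h2 : Real.log ((10.5:ℝ)/10.4) ≤ 10.5/10.4 - 1 :=
      Real.log_le_sub_one_of_pos (by norm_num)
    have : (10.5:ℝ)/10.4 - 1 ≤ 1/104 := by norm_num
    linarith
  have hL54 : L4 ≤ L5 := Real.log_le_log (by norm_num) (by norm_num)
  have hLd : 0 ≤ Ld := by
    have := Real.log_neg hδ.1 hδ.2
    rw [hLddef]; linarith
  have hlog5 : Real.log (10.5/δ) = L5 + Ld := by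
    rw [Real.log_div (by norm_num) hδ.1.ne', hL5def, hLddef]; ring
  have hlog4 : Real.log (10.4/δ) = L4 + Ld := by
    rw [Real.log_div (by norm_num) hδ.1.ne', hL4def, hLddef]; ring
  set x := (7/5) * A + Real.log (10.5/δ) with hxdef
  have hxval : x = 1.4 * A + L5 + Ld := by rw [hxdef, hlog5]; ring
  have hxpos : 0 < x := by rw [hxval]; linarith
  set r := (2:ℝ)^k * s2 with hrdef
  have hrpos : 0 < r := mul_pos (by positivity) hs2pos
  set lam := Real.sqrt (2 * x / r) with hlamdef
  have hlam2 : lam^2 = 2 * x / r := Real.sq_sqrt (by positivity)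
  have hlampos : 0 < lam := Real.sqrt_pos.2 (by positivity)
  -- t range in ℝ
  have htlow : (2:ℝ)^k ≤ (t:ℝ) := by
    have : ((2^k : ℕ):ℝ) ≤ (t:ℝ) := Nat.cast_le.2 hlow
    push_cast at this; linarith
  have hthigh : (t:ℝ) ≤ 2 * (2:ℝ)^k := by
    have h1 : t ≤ 2^(k+1) := thigh.le
    have : ((t:ℕ):ℝ) ≤ ((2^(k+1) : ℕ):ℝ) := Nat.cast_le.2 h1
    push_cast at this
    calc (t:ℝ) ≤ (2:ℝ)^(k+1) := this
      _ = 2 * (2:ℝ)^k := by ring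
  have htpos : (0:ℝ) < (t:ℝ) := by exact_mod_cast ht1
  -- r-relative bounds: r*s2/2 ≤ t ≤ r*s2
  have htr1 : r * s2 / 2 ≤ (t:ℝ) := by
    have : r * s2 / 2 = (2:ℝ)^k := by rw [hrdef, mul_assoc, ← sq, hs2sq]; ring
    linarith
  have htr2 : (t:ℝ) ≤ r * s2 := by
    have : r * s2 = 2 * (2:ℝ)^k := by rw [hrdef, mul_assoc, ← sq, hs2sq]; ring
    linarith
  have hquad : ((t:ℝ) + r)^2 ≤ (2 + 3*s2/2) * (r * (t:ℝ)) := by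
    have hfac : ((t:ℝ) - r*s2) * ((t:ℝ) - r*s2/2) ≤ 0 :=
      mul_nonpos_of_nonpos_of_nonneg (by linarith) (by linarith)
    have hexp : (t:ℝ)^2 + r^2 ≤ (3/2)*(t:ℝ)*r*s2 := by nlinarith [hfac, hs2sq]
    nlinarith [hexp]
  -- B ≥ A
  have hB : A ≤ B := by
    have h1 : ((k:ℝ)+1) * Real.log 2 ≤ Real.log (2*(t:ℝ)) := by
      have h2 : ((2:ℝ))^(k+1) ≤ 2*(t:ℝ) := by
        have : (2:ℝ)^(k+1) = 2 * (2:ℝ)^k := by ring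
        linarith
      have h3 : Real.log ((2:ℝ)^(k+1)) ≤ Real.log (2*(t:ℝ)) :=
        Real.log_le_log (by positivity) h2
      rw [Real.log_pow] at h3
      push_cast at h3
      linarith
    have h0 : (0:ℝ) < ((k:ℝ)+1) * Real.log 2 := by
      nlinarith [hl2pos, Nat.cast_nonneg (α := ℝ) k]
    exact Real.log_le_log h0 h1
  -- the core linear-arithmetic inequality
  have hcore : x * (1 + 3*s2/4) ≤ 2.89 * (B + 0.72 * (L4 + Ld)) := by
    have h1 : 1 + 3*s2/4 ≤ 2.0606602 := by linarith
    have h2 : x*(1 + 3*s2/4) ≤ x*2.0606602 :=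
      mul_le_mul_of_nonneg_left h1 hxpos.le
    have h3 : x*2.0606602 ≤ 2.89 * (B + 0.72 * (L4 + Ld)) := by
      rw [hxval]; linarith
    linarith
  -- T and g
  set T := (t:ℝ) * (B + 0.72 * Real.log (10.4/δ)) with hTdef
  have hBpos : 0 < B + 0.72 * (L4 + Ld) := by linarith
  have hTnn : 0 ≤ T := by
    rw [hTdef, hlog4]
    positivity
  set g := 1.7 * Real.sqrt T with hgdef
  have hgnn : 0 ≤ g := by positivity
  have hg2 : g^2 = 2.89 * T := by
    rw [hgdef, mul_pow, Real.sq_sqrt hTnn]; ring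
  -- main quadratic chain
  have hstep : x * ((t:ℝ)+r)^2 ≤ 5.78 * r * T := by
    calc x * ((t:ℝ)+r)^2 ≤ x * ((2 + 3*s2/2) * (r * (t:ℝ))) :=
          mul_le_mul_of_nonneg_left hquad hxpos.le
      _ = (x * (1 + 3*s2/4)) * (2 * r * (t:ℝ)) := by ring
      _ ≤ (2.89 * (B + 0.72 * (L4 + Ld))) * (2 * r * (t:ℝ)) := by
          apply mul_le_mul_of_nonneg_right hcore
          positivity
      _ = 5.78 * r * ((t:ℝ) * (B + 0.72 * (L4 + Ld))) := by ring
      _ = 5.78 * r * T := by rw [hTdef, hlog4]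
  have hrne : r ≠ 0 := ne_of_gt hrpos
  clear_value A L4 L5 Ld B s2 x r lam T g
  have key2 : (x + lam^2*(t:ℝ)/2)^2 ≤ (lam*g)^2 := by
    have e1 : (x + lam^2*(t:ℝ)/2)^2 = (x*((t:ℝ)+r))^2 / r^2 := by
      rw [hlam2]; field_simp; ring
    have e2 : (lam*g)^2 = (2*x/r) * (2.89*T) := by
      rw [mul_pow, hlam2, hg2]
    rw [e1, e2, div_le_iff₀ (pow_pos hrpos 2)]
    have e3 : (2*x/r) * (2.89*T) * r^2 = 2*x*r*(2.89*T) := by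
      field_simp
    rw [e3]
    calc (x*((t:ℝ)+r))^2 = x * (x*((t:ℝ)+r)^2) := by ring
      _ ≤ x * (5.78*r*T) := mul_le_mul_of_nonneg_left hstep hxpos.le
      _ = 2*x*r*(2.89*T) := by ring
  have hann : 0 ≤ x + lam^2*(t:ℝ)/2 := by
    have : 0 ≤ lam^2*(t:ℝ)/2 := by positivity
    linarith
  have hfin : x + lam^2*(t:ℝ)/2 ≤ lam*g := by
    have hlgnn : 0 ≤ lam*g := mul_nonneg hlampos.le hgnn
    calc x + lam^2*(t:ℝ)/2 = Real.sqrt ((x + lam^2*(t:ℝ)/2)^2) := (Real.sqrt_sq hann).symm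
      _ ≤ Real.sqrt ((lam*g)^2) := Real.sqrt_le_sqrt key2
      _ = lam*g := Real.sqrt_sq hlgnn
  linarith



set_option maxHeartbeats 1000000 in
/-- **Proposition 4.1.** For any `δ ∈ (0,1)`, any side information
`S : {1,…,N} → [0,1]`, and any predictable sequence `(β_t)` with `β_t ∈ [−1,1]`, with
probability at least `1−δ` it holds simultaneously for all `t ∈ {1,…,N}` that
`|Σ_{i=1}^t β_i U_i| ≤ 1.7·√(t·(log log(2t) + 0.72·log(10.4/δ)))`, where
`U_i = S(I_i) − Σ_{j∈N_i} q_i(j) S(j)`. -/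
theorem statement12
    [m0 : MeasurableSpace Ω] (μ : Measure Ω) [IsProbabilityMeasure μ]
    {N : ℕ} (hN : 1 ≤ N)
    (I : ℕ → Ω → Fin N) (hI : ∀ t, Measurable (I t))
    (q : ℕ → Ω → Fin N → ℝ)
    (hq_meas : ∀ t, 1 ≤ t → t ≤ N → ∀ i,
      StronglyMeasurable[filt I (t - 1)] fun ω => q t ω i)
    (hq_pos : ∀ t ω, 1 ≤ t → t ≤ N → ∀ i ∈ remaining I t ω, 0 < q t ω i)
    (hq_sum : ∀ t ω, 1 ≤ t → t ≤ N → ∑ i ∈ remaining I t ω, q t ω i = 1)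
    (hWoR : ∀ t ω, 1 ≤ t → t ≤ N → I t ω ∈ remaining I t ω)
    (hcond : ∀ t, 1 ≤ t → t ≤ N → ∀ G : Ω → Fin N → ℝ,
      (∀ i, StronglyMeasurable[filt I (t - 1)] fun ω => G ω i) →
      μ[(fun ω => G ω (I t ω)) | filt I (t - 1)]
        =ᵐ[μ] fun ω => ∑ i ∈ remaining I t ω, q t ω i * G ω i)
    (S : Fin N → ℝ) (hS : ∀ i, S i ∈ Set.Icc (0 : ℝ) 1)
    (β : ℕ → Ω → ℝ)
    (hβ_meas : ∀ t, 1 ≤ t → t ≤ N → StronglyMeasurable[filt I (t - 1)] (β t))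
    (hβ_bdd : ∀ t ω, β t ω ∈ Set.Icc (-1 : ℝ) 1)
    (δ : ℝ) (hδ : δ ∈ Set.Ioo (0 : ℝ) 1) :
    ENNReal.ofReal (1 - δ) ≤
      μ {ω | ∀ t, 1 ≤ t → t ≤ N →
        |Dproc S q I β t ω| ≤
          1.7 * Real.sqrt ((t : ℝ) *
            (Real.log (Real.log (2 * (t : ℝ))) + 0.72 * Real.log (10.4 / δ)))} := by
  obtain ⟨hδ0, hδ1⟩ := hδ
  have hl2pos : (0:ℝ) < Real.log 2 := by
    have := Real.log_two_gt_d9; norm_num at this ⊢; linarith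
  set xk : ℕ → ℝ := fun k =>
    (7/5) * Real.log (((k:ℝ)+1) * Real.log 2) + Real.log (10.5/δ) with hxkdef
  set lam : ℕ → ℝ := fun k =>
    Real.sqrt (2 * xk k / ((2:ℝ)^k * Real.sqrt 2)) with hlamdef
  have hykpos : ∀ k : ℕ, (0:ℝ) < ((k:ℝ)+1) * Real.log 2 := fun k => by
    nlinarith [hl2pos, Nat.cast_nonneg (α := ℝ) k]
  have hxkpos : ∀ k, 0 < xk k := by
    intro k
    have h1 : Real.log (Real.log 2) ≤ Real.log (((k:ℝ)+1) * Real.log 2) :=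
      Real.log_le_log hl2pos (by nlinarith [hl2pos, Nat.cast_nonneg (α := ℝ) k])
    have h2 : Real.log 8 ≤ Real.log (10.5/δ) := by
      apply Real.log_le_log (by norm_num)
      rw [le_div_iff₀ hδ0]
      nlinarith
    have h3 : Real.log (8:ℝ) = 3 * Real.log 2 := by
      rw [show (8:ℝ) = 2^3 by norm_num, Real.log_pow]; push_cast; ring
    have := loglog2_ge
    simp only [hxkdef]
    norm_num at this ⊢
    nlinarith [Real.log_two_gt_d9]
  have hlampos : ∀ k, 0 < lam k := fun k => Real.sqrt_pos.2 (by
    have := hxkpos k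
    have hs2 : (0:ℝ) < Real.sqrt 2 := Real.sqrt_pos.2 (by norm_num)
    positivity)
  -- the supermartingale bound via Ville
  have hville : ∀ c : ℝ, ∀ x : ℝ,
      μ {ω | ∃ t ≤ N, Real.exp x ≤ Mproc S q I β N c t ω}
        ≤ ENNReal.ofReal (Real.exp (-x)) := by
    intro c x
    have hsup : Supermartingale (Mproc S q I β N c) (filtr I hI) μ :=
      Mproc_supermartingale hI hq_meas hq_pos hq_sum hcond hS hβ_meas hβ_bdd c
    have h := ville hsup (fun t ω => Mproc_pos.le) (Real.exp_pos x) N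
    have hM0 : (Mproc S q I β N c 0) = fun _ => (1:ℝ) := by
      funext ω
      have h1 : min 0 N = 0 := min_eq_left (Nat.zero_le N)
      have h2 : Finset.Icc 1 0 = (∅ : Finset ℕ) := Finset.Icc_eq_empty (by norm_num)
      rw [Mproc, h1, Dproc, h2, Finset.sum_empty]
      norm_num
    rw [hM0] at h
    simpa [Real.exp_neg, one_div, measure_univ] using h
  -- the good set
  set g : ℕ → ℝ := fun t => 1.7 * Real.sqrt ((t : ℝ) *
      (Real.log (Real.log (2 * (t : ℝ))) + 0.72 * Real.log (10.4 / δ))) with hgdef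
  set Good : Set Ω := {ω | ∀ t, 1 ≤ t → t ≤ N → |Dproc S q I β t ω| ≤ g t} with hGood
  set Bad : ℕ → Set Ω := fun k =>
    {ω | ∃ t ≤ N, Real.exp (xk k) ≤ Mproc S q I β N (lam k) t ω} ∪
    {ω | ∃ t ≤ N, Real.exp (xk k) ≤ Mproc S q I β N (-(lam k)) t ω} with hBad
  have hGoodc : Goodᶜ ⊆ ⋃ k ∈ Finset.range N, Bad k := by
    intro ω hω
    simp only [hGood, Set.mem_compl_iff, Set.mem_setOf_eq] at hω
    push_neg at hω
    obtain ⟨t, ht1, htN, hgt⟩ := hω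
    set k := Nat.log 2 t with hk
    have htne : t ≠ 0 := by omega
    have hk1 : 2^k ≤ t := Nat.pow_log_le_self 2 htne
    have hk2 : t < 2^(k+1) := Nat.lt_pow_succ_log_self (by norm_num) t
    have hkN : k < N := by
      have : k < 2^k := Nat.lt_two_pow_self
      omega
    have hepoch := epoch_bound ⟨hδ0, hδ1⟩ k t ht1 hk1 hk2
    have hMt : ∀ c : ℝ, Mproc S q I β N c t ω
        = Real.exp (c * Dproc S q I β t ω - c^2 * (t:ℝ) /2) := by
      intro c
      rw [Mproc, min_eq_left htN]
    have hlamk := hlampos k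
    have hlam2 : (lam k)^2 = 2 * xk k / ((2:ℝ)^k * Real.sqrt 2) := by
      apply Real.sq_sqrt
      have := hxkpos k
      have hs2 : (0:ℝ) < Real.sqrt 2 := Real.sqrt_pos.2 (by norm_num)
      positivity
    -- epoch bound in terms of lam k, xk k, g t
    have hbd : xk k ≤ lam k * g t - (lam k)^2 * (t:ℝ) / 2 := hepoch
    simp only [Set.mem_iUnion]
    refine ⟨k, by simpa using hkN, ?_⟩
    rcases lt_abs.1 hgt with hpos | hneg
    · left
      refine ⟨t, htN, ?_⟩
      rw [hMt, Real.exp_le_exp]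
      have : lam k * g t < lam k * Dproc S q I β t ω :=
        mul_lt_mul_of_pos_left hpos hlamk
      linarith
    · right
      refine ⟨t, htN, ?_⟩
      rw [hMt, Real.exp_le_exp, neg_sq]
      have : lam k * g t < lam k * (-(Dproc S q I β t ω)) :=
        mul_lt_mul_of_pos_left hneg hlamk
      linarith
  -- measure of the union
  have hBadk : ∀ k, μ (Bad k) ≤ ENNReal.ofReal (2 * Real.exp (-(xk k))) := by
    intro k
    calc μ (Bad k) ≤ μ {ω | ∃ t ≤ N, Real.exp (xk k) ≤ Mproc S q I β N (lam k) t ω}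
          + μ {ω | ∃ t ≤ N, Real.exp (xk k) ≤ Mproc S q I β N (-(lam k)) t ω} :=
        measure_union_le _ _
      _ ≤ ENNReal.ofReal (Real.exp (-(xk k))) + ENNReal.ofReal (Real.exp (-(xk k))) :=
        add_le_add (hville _ _) (hville _ _)
      _ = ENNReal.ofReal (2 * Real.exp (-(xk k))) := by
        rw [← ENNReal.ofReal_add (Real.exp_nonneg _) (Real.exp_nonneg _)]
        norm_num
        ring_nf
        rw [ENNReal.ofReal_mul (Real.exp_nonneg _)]
        norm_num
  have hexpval : ∀ k : ℕ, Real.exp (-(xk k))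
      = (((k:ℝ)+1) * Real.log 2) ^ (-(7/5):ℝ) * (δ/10.5) := by
    intro k
    have hy := hykpos k
    rw [hxkdef]
    simp only [neg_add]
    rw [Real.exp_add]
    congr 1
    · rw [Real.rpow_def_of_pos hy]
      congr 1
      ring
    · rw [Real.exp_neg, Real.exp_log (by positivity), inv_div]
  have hsumreal : ∑ k ∈ Finset.range N, 2 * Real.exp (-(xk k)) ≤ δ := by
    have h1 : ∑ k ∈ Finset.range N, 2 * Real.exp (-(xk k))
        = (2 * (δ/10.5)) * ∑ k ∈ Finset.range N, (((k:ℝ)+1) * Real.log 2) ^ (-(7/5):ℝ) := by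
      rw [Finset.mul_sum]
      apply Finset.sum_congr rfl
      intro k _
      rw [hexpval k]; ring
    rw [h1]
    have h2 := series_bound N
    have h3 : (0:ℝ) ≤ 2 * (δ/10.5) := by positivity
    calc (2 * (δ/10.5)) * ∑ k ∈ Finset.range N, (((k:ℝ)+1) * Real.log 2) ^ (-(7/5):ℝ)
        ≤ (2 * (δ/10.5)) * 5.25 := mul_le_mul_of_nonneg_left h2 h3
      _ = δ := by ring
  have hunion : μ (⋃ k ∈ Finset.range N, Bad k) ≤ ENNReal.ofReal δ := by
    calc μ (⋃ k ∈ Finset.range N, Bad k) ≤ ∑ k ∈ Finset.range N, μ (Bad k) :=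
        measure_biUnion_finset_le _ _
      _ ≤ ∑ k ∈ Finset.range N, ENNReal.ofReal (2 * Real.exp (-(xk k))) :=
        Finset.sum_le_sum fun k _ => hBadk k
      _ = ENNReal.ofReal (∑ k ∈ Finset.range N, 2 * Real.exp (-(xk k))) :=
        (ENNReal.ofReal_sum_of_nonneg fun k _ => by positivity).symm
      _ ≤ ENNReal.ofReal δ := ENNReal.ofReal_le_ofReal hsumreal
  have hGoodmeas : MeasurableSet Good := by
    have : Good = ⋂ (t : ℕ), ⋂ (_ : 1 ≤ t), ⋂ (_ : t ≤ N),
        {ω | |Dproc S q I β t ω| ≤ g t} := by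
      ext ω; simp [hGood]
    rw [this]
    refine MeasurableSet.iInter fun t => MeasurableSet.iInter fun _ =>
      MeasurableSet.iInter fun htN => ?_
    have hD : Measurable (Dproc S q I β t) :=
      ((Dproc_SM hI htN hq_meas hβ_meas).mono ((filtr I hI).le t)).measurable
    exact measurableSet_le hD.abs.stronglyMeasurable.measurable measurable_const
  have hcompl : μ Goodᶜ ≤ ENNReal.ofReal δ :=
    le_trans (measure_mono hGoodc) hunion
  have h1 : μ Goodᶜ = 1 - μ Good := by
    rw [measure_compl hGoodmeas (measure_ne_top μ Good), measure_univ]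
  have h2 : (1:ENNReal) ≤ ENNReal.ofReal δ + μ Good := by
    rw [h1] at hcompl
    calc (1:ENNReal) ≤ (1 - μ Good) + μ Good := le_tsub_add
      _ ≤ ENNReal.ofReal δ + μ Good := add_le_add_left hcompl _
  have h3 : ENNReal.ofReal (1-δ) + ENNReal.ofReal δ = 1 := by
    rw [← ENNReal.ofReal_add (by linarith) hδ0.le]
    norm_num
  calc ENNReal.ofReal (1-δ) = (ENNReal.ofReal (1-δ) + ENNReal.ofReal δ) - ENNReal.ofReal δ := by
        rw [ENNReal.add_sub_cancel_right ENNReal.ofReal_ne_top]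
    _ = 1 - ENNReal.ofReal δ := by rw [h3]
    _ ≤ (ENNReal.ofReal δ + μ Good) - ENNReal.ofReal δ := tsub_le_tsub_right h2 _
    _ = μ Good := by rw [ENNReal.add_sub_cancel_left ENNReal.ofReal_ne_top]

end RLFA
end
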